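/- Let p ≥ 2 be an integer and s ∈ ℝ^p with sᵢ > 0 for all i, and let w_w = (s₁, …, s_p)/Σᵢ sᵢ. Let w ∈ ℝ^p be a fixed vector with Σᵢ |wᵢ| = 1, w ≠ w_w, and w ≠ −w_w. Then Q_S(w,r) → +∞ as r → 1 from the left (with r ranging in (0,1)); that is, among all normalized group effects of the general uniform model, the variability weighted group effect τ_w is (up to overall sign) the only one whose estimator variance remains bounded as r approaches 1. -/

import Mathlib

open Matrix Filter Topology

/-- The `p × p` Gram/correlation matrix of a uniform model at multicollinearity
level `r`: diagonal entries `1`, off-diagonal entries `r`. -/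
noncomputable def unifMat (p : ℕ) (r : ℝ) : Matrix (Fin p) (Fin p) ℝ :=
  fun i j => if i = j then 1 else r

/-- `Q_S(w,r) = wᵀ S⁻¹ A(p,r)⁻¹ S⁻¹ w` with `S = diag s`. -/
noncomputable def QSform (p : ℕ) (r : ℝ) (s w : Fin p → ℝ) : ℝ :=
  (fun i => w i / s i) ⬝ᵥ (unifMat p r)⁻¹.mulVec (fun i => w i / s i)

/-- for any fixed weight vector `w` with `Σᵢ |wᵢ| = 1` that is not
`±w_w` (the variability weight vector `w_w = s/Σᵢ sᵢ`), the variance `Q_S(w,r)`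
tends to `+∞` as `r → 1⁻` (with `r` ranging in `(0,1)`); only the variability
weighted group effect (up to sign) stays bounded. -/
theorem QS_variance_diverges_off_variability_weight (p : ℕ) (hp : 2 ≤ p)
    (s : Fin p → ℝ) (hs : ∀ i, 0 < s i) (w : Fin p → ℝ)
    (hw1 : (∑ i, |w i|) = 1)
    (hne : w ≠ fun i => s i / ∑ j, s j)
    (hne' : w ≠ fun i => -(s i / ∑ j, s j)) :
    Tendsto (fun r : ℝ => QSform p r s w) (𝓝[Set.Ioo (0 : ℝ) 1] 1) atTop := by
  haveI : Nonempty (Fin p) := Fin.pos_iff_nonempty.mp (by omega)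
  have hp2 : (2:ℝ) ≤ (p:ℝ) := by exact_mod_cast hp
  have hsum : 0 < ∑ j, s j := Finset.sum_pos (fun i _ => hs i) Finset.univ_nonempty
  set v : Fin p → ℝ := fun i => w i / s i with hv
  set T : ℝ := ∑ i, v i with hT
  set N : ℝ := ∑ i, v i ^ 2 with hN
  -- v is not constant
  have hvne : ∃ i j, v i ≠ v j := by
    by_contra h
    push_neg at h
    obtain ⟨i0⟩ := ‹Nonempty (Fin p)›
    set c := v i0 with hc
    have hw : ∀ i, w i = c * s i := fun i => (div_eq_iff (hs i).ne').mp (h i i0)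
    have h1 : |c| * ∑ j, s j = 1 := by
      rw [← hw1, Finset.mul_sum]
      exact Finset.sum_congr rfl fun i _ => by rw [hw i, abs_mul, abs_of_pos (hs i)]
    have habs : |c| = (∑ j, s j)⁻¹ := by
      field_simp
      linarith
    rcases (abs_eq (by positivity)).mp habs with hc1 | hc1
    · exact hne (funext fun i => by rw [hw i, hc1]; ring)
    · exact hne' (funext fun i => by rw [hw i, hc1]; ring)
  -- strict Cauchy-Schwarz: T^2 < p * N
  have key : T ^ 2 < (p:ℝ) * N := by
    obtain ⟨i, j, hij⟩ := hvne
    have hsq : ∑ a, ∑ b, (v a - v b) ^ 2 = 2 * ((p:ℝ) * N - T ^ 2) := by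
      have : ∀ a, ∑ b, (v a - v b) ^ 2 = (p:ℝ) * v a ^ 2 - 2 * v a * T + N := by
        intro a
        have : ∀ b, (v a - v b) ^ 2 = v a ^ 2 - (2 * v a) * v b + v b ^ 2 := fun b => by ring
        rw [Finset.sum_congr rfl fun b _ => this b]
        rw [Finset.sum_add_distrib, Finset.sum_sub_distrib, Finset.sum_const,
          Finset.card_univ, Fintype.card_fin, ← Finset.mul_sum, ← hT, ← hN, nsmul_eq_mul]
      have e : ∀ a, (p:ℝ) * v a ^ 2 - 2 * v a * T + N = (p:ℝ) * v a ^ 2 - (2 * T) * v a + N :=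
        fun a => by ring
      rw [Finset.sum_congr rfl fun a _ => (this a).trans (e a)]
      rw [Finset.sum_add_distrib, Finset.sum_sub_distrib, Finset.sum_const,
        Finset.card_univ, Fintype.card_fin, ← Finset.mul_sum, ← Finset.mul_sum, ← hT, ← hN,
        nsmul_eq_mul]
      ring
    have h1 : (v i - v j) ^ 2 ≤ ∑ b, (v i - v b) ^ 2 :=
      Finset.single_le_sum (f := fun b => (v i - v b) ^ 2) (fun b _ => sq_nonneg _)
        (Finset.mem_univ j)
    have h2 : ∑ b, (v i - v b) ^ 2 ≤ ∑ a, ∑ b, (v a - v b) ^ 2 :=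
      Finset.single_le_sum (f := fun a => ∑ b, (v a - v b) ^ 2)
        (fun a _ => Finset.sum_nonneg fun b _ => sq_nonneg _) (Finset.mem_univ i)
    have h3 : 0 < (v i - v j) ^ 2 := by
      have h4 : v i - v j ≠ 0 := sub_ne_zero.mpr hij
      positivity
    nlinarith [hsq]
  -- explicit formula for QSform on Ioo 0 1
  have hinv : ∀ r ∈ Set.Ioo (0:ℝ) 1,
      QSform p r s w = (N - r / (1 + ((p:ℝ) - 1) * r) * T ^ 2) * (1 - r)⁻¹ := by
    intro r hr
    have hr1 : (1:ℝ) - r ≠ 0 := by nlinarith [hr.2]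
    have hd : (1:ℝ) + ((p:ℝ) - 1) * r ≠ 0 := by nlinarith [hr.1, hr.2]
    set c : ℝ := r / (1 + ((p:ℝ) - 1) * r) with hcdef
    have hcmul : c * (1 + ((p:ℝ) - 1) * r) = r := by
      rw [hcdef]; exact div_mul_cancel₀ r hd
    set B : Matrix (Fin p) (Fin p) ℝ :=
      fun i j => (1 - r)⁻¹ * ((if i = j then 1 else 0) - c) with hB
    have hrow : ∀ i : Fin p, (∑ k, if i = k then (1:ℝ) else r) = 1 + ((p:ℝ) - 1) * r := by
      intro i
      have e : (∑ k, if i = k then (1:ℝ) else r)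
          = ∑ k, ((if i = k then (1 - r : ℝ) else 0) + r) :=
        Finset.sum_congr rfl fun k _ => by split <;> ring
      rw [e, Finset.sum_add_distrib, Finset.sum_ite_eq, Finset.sum_const,
        Finset.card_univ, Fintype.card_fin]
      simp
      ring
    have hAB : unifMat p r * B = 1 := by
      ext i j
      rw [Matrix.mul_apply]; simp only [unifMat, hB, Matrix.one_apply]
      have e : ∀ k : Fin p, (if i = k then (1:ℝ) else r) * ((1 - r)⁻¹ * ((if k = j then 1 else 0) - c))
          = (1 - r)⁻¹ * ((if i = k then (1:ℝ) else r) * (if k = j then 1 else 0))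
            - (1 - r)⁻¹ * c * (if i = k then (1:ℝ) else r) := fun k => by ring
      rw [Finset.sum_congr rfl fun k _ => e k, Finset.sum_sub_distrib, ← Finset.mul_sum,
        ← Finset.mul_sum, hrow i]
      have e2 : (∑ k, (if i = k then (1:ℝ) else r) * (if k = j then 1 else 0))
          = if i = j then (1:ℝ) else r := by
        simp [mul_ite]
      rw [e2]
      rcases eq_or_ne i j with h | h
      · simp only [h, if_pos rfl]
        field_simp
        rw [if_pos trivial, if_pos trivial]
        linarith [hcmul, show c * (1 + r * ((p:ℝ) - 1)) = r by linear_combination hcmul]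
      · simp only [if_neg h]
        have : (1 - r)⁻¹ * c * (1 + ((p:ℝ) - 1) * r) = (1 - r)⁻¹ * r := by
          rw [mul_assoc, hcmul]
        rw [this]
        ring
    rw [QSform, Matrix.inv_eq_right_inv hAB]
    simp only [dotProduct, Matrix.mulVec, hB]
    have hin : ∀ i : Fin p,
        (∑ j, (1 - r)⁻¹ * ((if i = j then (1:ℝ) else 0) - c) * (w j / s j))
          = (1 - r)⁻¹ * (v i - c * T) := by
      intro i
      have e : ∀ j : Fin p, (1 - r)⁻¹ * ((if i = j then (1:ℝ) else 0) - c) * (w j / s j)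
          = (1 - r)⁻¹ * ((if i = j then (1:ℝ) else 0) * v j) - (1 - r)⁻¹ * c * v j := fun j => by
        simp only [hv]; ring
      rw [Finset.sum_congr rfl fun j _ => e j, Finset.sum_sub_distrib, ← Finset.mul_sum,
        ← Finset.mul_sum, ← hT]
      have e2 : (∑ j, (if i = j then (1:ℝ) else 0) * v j) = v i := by simp [ite_mul]
      rw [e2]
      ring
    calc (∑ i, (w i / s i) * ∑ j, (1 - r)⁻¹ * ((if i = j then (1:ℝ) else 0) - c) * (w j / s j))
        = ∑ i, ((1 - r)⁻¹ * v i ^ 2 - (1 - r)⁻¹ * c * T * v i) := by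
          refine Finset.sum_congr rfl fun i _ => ?_
          rw [hin i]
          simp only [hv]; ring
      _ = (N - c * T ^ 2) * (1 - r)⁻¹ := by
          rw [Finset.sum_sub_distrib, ← Finset.mul_sum, ← Finset.mul_sum, ← hT, ← hN]
          ring
  -- limits
  have hL : 0 < N - T ^ 2 / (p:ℝ) := by
    have hp0 : (0:ℝ) < p := by linarith
    have : T ^ 2 / (p:ℝ) < N := (div_lt_iff₀ hp0).mpr (by nlinarith)
    linarith
  have hd1 : (1:ℝ) + ((p:ℝ) - 1) * 1 ≠ 0 := by nlinarith
  have hcont : ContinuousAt (fun r : ℝ => N - r / (1 + ((p:ℝ) - 1) * r) * T ^ 2) 1 := by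
    apply ContinuousAt.sub continuousAt_const
    apply ContinuousAt.mul _ continuousAt_const
    exact ContinuousAt.div continuousAt_id (by fun_prop) hd1
  have hval : N - (1:ℝ) / (1 + ((p:ℝ) - 1) * 1) * T ^ 2 = N - T ^ 2 / (p:ℝ) := by
    rw [show (1:ℝ) + ((p:ℝ) - 1) * 1 = p by ring]; ring
  have hlim1 : Tendsto (fun r : ℝ => N - r / (1 + ((p:ℝ) - 1) * r) * T ^ 2)
      (𝓝[Set.Ioo (0:ℝ) 1] 1) (𝓝 (N - T ^ 2 / (p:ℝ))) := by
    have := (hcont.tendsto).mono_left (nhdsWithin_le_nhds (s := Set.Ioo (0:ℝ) 1))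
    rwa [hval] at this
  have hlim2 : Tendsto (fun r : ℝ => (1 - r)⁻¹) (𝓝[Set.Ioo (0:ℝ) 1] 1) atTop := by
    apply tendsto_inv_nhdsGT_zero.comp
    apply tendsto_nhdsWithin_of_tendsto_nhds_of_eventually_within
    · have : Tendsto (fun r : ℝ => 1 - r) (𝓝 (1:ℝ)) (𝓝 (1 - 1)) :=
        tendsto_const_nhds.sub tendsto_id
      simpa using this.mono_left (nhdsWithin_le_nhds (s := Set.Ioo (0:ℝ) 1))
    · filter_upwards [self_mem_nhdsWithin] with r hr
      simp only [Set.mem_Ioi]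
      linarith [hr.2]
  refine (Filter.Tendsto.pos_mul_atTop hL hlim1 hlim2).congr' ?_
  filter_upwards [self_mem_nhdsWithin] with r hr
  exact (hinv r hr).symm
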